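/- Let M ≥ 2 be an integer, 1 ≤ l ≤ M-1 and Θ = (θ_1,…,θ_{M-1}) ∈ ℝ^{M-1}. Then lim_{a→∞} [ -a² (d/da) 𝓗_l(a,Θ) ] = -(1 + (-1)^M)π - 2 Σ_{k=0}^{l-1} (-1)^{l+k} (θ_k - θ_l + π) e^{-2i(θ_k - θ_l)} - 2(-1)^M Σ_{k=l}^{M-1} (-1)^{l+k} (θ_k - θ_l - π) e^{-2i(θ_k - θ_l)}, where θ_0 := 0. -/

import Mathlib

open Complex Real Finset Filter Topology

noncomputable section

/-- `A(a) = -2ai/(a+i)`. -/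
def Afun (a : ℝ) : ℂ := -2 * (a : ℂ) * Complex.I / ((a : ℂ) + Complex.I)

/-- The angles `θ_0 = 0`, `θ_j = Θ_j` for `1 ≤ j ≤ M-1`, read off a vector `Θ ∈ ℝ^{M-1}`. -/
def thN (M : ℕ) (Θ : Fin (M - 1) → ℝ) (j : ℕ) : ℝ :=
  if h : 1 ≤ j ∧ j ≤ M - 1 then Θ ⟨j - 1, by omega⟩ else 0

/-- `𝓗_l(a,Θ)`, for angles `θ : ℕ → ℝ` (with `θ 0 = 0` understood). -/
def HfunN (M : ℕ) (θ : ℕ → ℝ) (l : ℕ) (a : ℝ) : ℂ :=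
  (Complex.exp ((π : ℂ) * Afun a) - (-1 : ℂ) ^ M * Complex.exp (-((π : ℂ) * Afun a))) / 2 +
    (∑ k ∈ Finset.range l,
      (-1 : ℂ) ^ (l + k) * Complex.exp (Afun a * ((θ k - θ l + π : ℝ) : ℂ))) +
    (-1 : ℂ) ^ M * ∑ k ∈ Finset.Icc l (M - 1),
      (-1 : ℂ) ^ (l + k) * Complex.exp (Afun a * ((θ k - θ l - π : ℝ) : ℂ))

/-- The "slope" function: `deriv H = A'(a) · Gfun (A a)`. -/
def Gfun (M l : ℕ) (θ : ℕ → ℝ) (z : ℂ) : ℂ :=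
  ((π : ℂ) * Complex.exp ((π : ℂ) * z) +
      (-1 : ℂ) ^ M * (π : ℂ) * Complex.exp (-((π : ℂ) * z))) / 2 +
    (∑ k ∈ Finset.range l,
      (-1 : ℂ) ^ (l + k) * ((θ k - θ l + π : ℝ) : ℂ) *
        Complex.exp (z * ((θ k - θ l + π : ℝ) : ℂ))) +
    (-1 : ℂ) ^ M * ∑ k ∈ Finset.Icc l (M - 1),
      (-1 : ℂ) ^ (l + k) * ((θ k - θ l - π : ℝ) : ℂ) *
        Complex.exp (z * ((θ k - θ l - π : ℝ) : ℂ))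

lemma denom_ne (a : ℝ) : ((a : ℂ) + Complex.I) ≠ 0 := by
  intro h
  have := congrArg Complex.im h
  simp at this

lemma hasDerivAt_Afun (a : ℝ) :
    HasDerivAt Afun (2 / ((a : ℂ) + Complex.I) ^ 2) a := by
  have h1 : HasDerivAt (fun x : ℝ => (x : ℂ)) 1 a := by
    simpa using (hasDerivAt_id a).ofReal_comp
  have num : HasDerivAt (fun x : ℝ => -2 * (x : ℂ) * Complex.I) (-2 * Complex.I) a := by
    simpa using (h1.const_mul (-2 : ℂ)).mul_const Complex.I
  have den : HasDerivAt (fun x : ℝ => (x : ℂ) + Complex.I) 1 a := h1.add_const _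
  have h2 := num.div den (denom_ne a)
  have hnum : (-2 * Complex.I * ((a : ℂ) + Complex.I) - -2 * (a : ℂ) * Complex.I * 1) = 2 := by
    linear_combination (-2 : ℂ) * Complex.I_sq
  rw [hnum] at h2
  exact h2

lemma hasDerivAt_H (M l : ℕ) (θ : ℕ → ℝ) (a : ℝ) :
    HasDerivAt (fun x : ℝ => HfunN M θ l x)
      ((2 / ((a : ℂ) + Complex.I) ^ 2) * Gfun M l θ (Afun a)) a := by
  have hA := hasDerivAt_Afun a
  set A' : ℂ := 2 / ((a : ℂ) + Complex.I) ^ 2 with hA'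
  have e1 : HasDerivAt (fun x : ℝ => Complex.exp ((π : ℂ) * Afun x))
      (Complex.exp ((π : ℂ) * Afun a) * ((π : ℂ) * A')) a := (hA.const_mul (π : ℂ)).cexp
  have e2 : HasDerivAt (fun x : ℝ => Complex.exp (-((π : ℂ) * Afun x)))
      (Complex.exp (-((π : ℂ) * Afun a)) * (-((π : ℂ) * A'))) a :=
    ((hA.const_mul (π : ℂ)).neg).cexp
  have h1 := ((e1.sub (e2.const_mul ((-1 : ℂ) ^ M))).div_const 2)
  have hs1 : HasDerivAt (fun x : ℝ => ∑ k ∈ Finset.range l,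
      (-1 : ℂ) ^ (l + k) * Complex.exp (Afun x * ((θ k - θ l + π : ℝ) : ℂ)))
      (∑ k ∈ Finset.range l, (-1 : ℂ) ^ (l + k) *
        (Complex.exp (Afun a * ((θ k - θ l + π : ℝ) : ℂ)) * (A' * ((θ k - θ l + π : ℝ) : ℂ)))) a :=
    HasDerivAt.fun_sum fun k _ => ((hA.mul_const _).cexp).const_mul _
  have hs2 : HasDerivAt (fun x : ℝ => ∑ k ∈ Finset.Icc l (M - 1),
      (-1 : ℂ) ^ (l + k) * Complex.exp (Afun x * ((θ k - θ l - π : ℝ) : ℂ)))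
      (∑ k ∈ Finset.Icc l (M - 1), (-1 : ℂ) ^ (l + k) *
        (Complex.exp (Afun a * ((θ k - θ l - π : ℝ) : ℂ)) * (A' * ((θ k - θ l - π : ℝ) : ℂ)))) a :=
    HasDerivAt.fun_sum fun k _ => ((hA.mul_const _).cexp).const_mul _
  have total := (h1.add hs1).add (hs2.const_mul ((-1 : ℂ) ^ M))
  have key : ∀ (s : Finset ℕ) (c : ℕ → ℂ),
      A' * ∑ k ∈ s, (-1 : ℂ) ^ (l + k) * c k * Complex.exp (Afun a * c k)
        = ∑ k ∈ s, (-1 : ℂ) ^ (l + k) *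
            (Complex.exp (Afun a * c k) * (A' * c k)) := by
    intro s c
    rw [Finset.mul_sum]
    exact Finset.sum_congr rfl fun k _ => by ring
  convert total using 1
  · rfl
  · rfl
  unfold Gfun
  rw [mul_add, mul_add, key _ (fun k => ((θ k - θ l + π : ℝ) : ℂ)),
    show A' * ((-1 : ℂ) ^ M * ∑ k ∈ Finset.Icc l (M - 1),
      (-1 : ℂ) ^ (l + k) * ((θ k - θ l - π : ℝ) : ℂ) *
        Complex.exp (Afun a * ((θ k - θ l - π : ℝ) : ℂ)))
      = (-1 : ℂ) ^ M * (A' * ∑ k ∈ Finset.Icc l (M - 1),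
      (-1 : ℂ) ^ (l + k) * ((θ k - θ l - π : ℝ) : ℂ) *
        Complex.exp (Afun a * ((θ k - θ l - π : ℝ) : ℂ))) from by ring,
    key _ (fun k => ((θ k - θ l - π : ℝ) : ℂ))]
  ring

lemma cont_G (M l : ℕ) (θ : ℕ → ℝ) : Continuous (Gfun M l θ) := by
  unfold Gfun
  fun_prop

lemma exp_shift_plus (x : ℝ) :
    Complex.exp (-2 * Complex.I * ((x + π : ℝ) : ℂ)) =
      Complex.exp (-2 * Complex.I * ((x : ℝ) : ℂ)) := by
  push_cast
  rw [show -2 * Complex.I * ((x : ℂ) + (π : ℂ))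
      = -2 * Complex.I * (x : ℂ) + -(2 * (π : ℂ) * Complex.I) by ring,
    Complex.exp_add, Complex.exp_neg, Complex.exp_two_pi_mul_I, inv_one, mul_one]

lemma exp_shift_minus (x : ℝ) :
    Complex.exp (-2 * Complex.I * ((x - π : ℝ) : ℂ)) =
      Complex.exp (-2 * Complex.I * ((x : ℝ) : ℂ)) := by
  push_cast
  rw [show -2 * Complex.I * ((x : ℂ) - (π : ℂ))
      = -2 * Complex.I * (x : ℂ) + 2 * (π : ℂ) * Complex.I by ring,
    Complex.exp_add, Complex.exp_two_pi_mul_I, mul_one]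

theorem limit_deriv_H (M : ℕ) (hM : 2 ≤ M) (l : ℕ) (hl1 : 1 ≤ l) (hl2 : l ≤ M - 1)
    (Θ : Fin (M - 1) → ℝ) :
    Tendsto (fun a : ℝ => -(a : ℂ) ^ 2 * deriv (fun x : ℝ => HfunN M (thN M Θ) l x) a)
      atTop
      (𝓝 (-(1 + (-1 : ℂ) ^ M) * (π : ℂ) -
        2 * ∑ k ∈ Finset.range l,
          (-1 : ℂ) ^ (l + k) * ((thN M Θ k - thN M Θ l + π : ℝ) : ℂ) *
            Complex.exp (-2 * Complex.I * ((thN M Θ k - thN M Θ l : ℝ) : ℂ)) -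
        2 * (-1 : ℂ) ^ M * ∑ k ∈ Finset.Icc l (M - 1),
          (-1 : ℂ) ^ (l + k) * ((thN M Θ k - thN M Θ l - π : ℝ) : ℂ) *
            Complex.exp (-2 * Complex.I * ((thN M Θ k - thN M Θ l : ℝ) : ℂ)))) := by
  set θ := thN M Θ with hθdef
  set F : ℂ → ℂ := fun z => -2 * z ^ 2 * Gfun M l θ (-2 * Complex.I * z) with hF
  have hd : (fun a : ℝ => -(a : ℂ) ^ 2 * deriv (fun x : ℝ => HfunN M θ l x) a)
      = fun a : ℝ => F ((a : ℂ) / ((a : ℂ) + Complex.I)) := by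
    funext a
    rw [(hasDerivAt_H M l θ a).deriv]
    have hA : Afun a = -2 * Complex.I * ((a : ℂ) / ((a : ℂ) + Complex.I)) := by
      unfold Afun; ring
    simp only [hF, ← hA]
    field_simp
  rw [hd]
  have hinv : Tendsto (fun a : ℝ => ((a : ℂ) + Complex.I)⁻¹) atTop (𝓝 0) := by
    apply squeeze_zero_norm' ?_ tendsto_inv_atTop_zero
    filter_upwards [eventually_ge_atTop (1 : ℝ)] with a ha
    rw [norm_inv]
    have h1 : a ≤ ‖(a : ℂ) + Complex.I‖ := by
      calc a ≤ |a| := le_abs_self a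
        _ = |((a : ℂ) + Complex.I).re| := by simp
        _ ≤ ‖(a : ℂ) + Complex.I‖ := Complex.abs_re_le_norm _
    exact inv_anti₀ (by linarith) h1
  have ht : Tendsto (fun a : ℝ => (a : ℂ) / ((a : ℂ) + Complex.I)) atTop (𝓝 1) := by
    have h := (tendsto_const_nhds (x := (1 : ℂ)) (f := atTop)).sub (hinv.const_mul Complex.I)
    simp only [mul_zero, sub_zero] at h
    refine h.congr fun a => ?_
    rw [← div_eq_mul_inv,
      show ((a : ℂ)) / ((a : ℂ) + Complex.I)
        = ((a : ℂ) + Complex.I - Complex.I) / ((a : ℂ) + Complex.I) by ring_nf,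
      sub_div, div_self (denom_ne a)]
  have hc : ContinuousAt F 1 := by
    apply Continuous.continuousAt
    exact (continuous_const.mul (continuous_pow 2)).mul
      ((cont_G M l θ).comp (continuous_const.mul continuous_id))
  have hcomp := hc.tendsto.comp ht
  have hval : F 1 = (-(1 + (-1 : ℂ) ^ M) * (π : ℂ) -
        2 * ∑ k ∈ Finset.range l,
          (-1 : ℂ) ^ (l + k) * ((θ k - θ l + π : ℝ) : ℂ) *
            Complex.exp (-2 * Complex.I * ((θ k - θ l : ℝ) : ℂ)) -
        2 * (-1 : ℂ) ^ M * ∑ k ∈ Finset.Icc l (M - 1),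
          (-1 : ℂ) ^ (l + k) * ((θ k - θ l - π : ℝ) : ℂ) *
            Complex.exp (-2 * Complex.I * ((θ k - θ l : ℝ) : ℂ))) := by
    have hE1 : Complex.exp ((π : ℂ) * (-2 * Complex.I)) = 1 := by
      rw [show (π : ℂ) * (-2 * Complex.I) = -(2 * (π : ℂ) * Complex.I) by ring,
        Complex.exp_neg, Complex.exp_two_pi_mul_I, inv_one]
    have hE2 : Complex.exp (-((π : ℂ) * (-2 * Complex.I))) = 1 := by
      rw [show -((π : ℂ) * (-2 * Complex.I)) = 2 * (π : ℂ) * Complex.I by ring,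
        Complex.exp_two_pi_mul_I]
    have hS1 : ∑ k ∈ Finset.range l,
        (-1 : ℂ) ^ (l + k) * ((θ k - θ l + π : ℝ) : ℂ) *
          Complex.exp (-2 * Complex.I * ((θ k - θ l + π : ℝ) : ℂ))
        = ∑ k ∈ Finset.range l,
        (-1 : ℂ) ^ (l + k) * ((θ k - θ l + π : ℝ) : ℂ) *
          Complex.exp (-2 * Complex.I * ((θ k - θ l : ℝ) : ℂ)) :=
      Finset.sum_congr rfl fun k _ => by rw [exp_shift_plus]
    have hS2 : ∑ k ∈ Finset.Icc l (M - 1),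
        (-1 : ℂ) ^ (l + k) * ((θ k - θ l - π : ℝ) : ℂ) *
          Complex.exp (-2 * Complex.I * ((θ k - θ l - π : ℝ) : ℂ))
        = ∑ k ∈ Finset.Icc l (M - 1),
        (-1 : ℂ) ^ (l + k) * ((θ k - θ l - π : ℝ) : ℂ) *
          Complex.exp (-2 * Complex.I * ((θ k - θ l : ℝ) : ℂ)) :=
      Finset.sum_congr rfl fun k _ => by rw [exp_shift_minus]
    simp only [hF, mul_one, one_pow]
    unfold Gfun
    rw [hE1, hE2, hS1, hS2]
    ring
  rw [← hval]
  exact hcomp
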